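/- Let K be a field, let f, g ∈ K[x] with g nonconstant, and let h be an element of the field of rational functions K(X) such that evaluating g at h gives the image of f in K(X) (i.e., aeval h g = algebraMap K[X] K(X) f). Then h is a polynomial: there exists h₀ ∈ K[x] whose image in K(X) equals h, and consequently f = g.comp h₀. -/

import Mathlib

open Polynomial

theorem stmt_0 (K : Type*) [Field K] (f g : K[X]) (hg : 0 < g.natDegree)
    (h : RatFunc K) (hfg : Polynomial.aeval h g = algebraMap K[X] (RatFunc K) f) :
    ∃ h₀ : K[X], algebraMap K[X] (RatFunc K) h₀ = h ∧ f = g.comp h₀ := by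
  have hgne : g ≠ 0 := fun h0 => by simp [h0] at hg
  have hlc : g.leadingCoeff ≠ 0 := leadingCoeff_ne_zero.mpr hgne
  set p : K[X][X] := Polynomial.C (Polynomial.C g.leadingCoeff⁻¹) *
      (g.map (algebraMap K K[X]) - Polynomial.C f) with hp
  have hdeglt : (Polynomial.C f).degree < (g.map (algebraMap K K[X])).degree := by
    rw [Polynomial.algebraMap_eq, degree_map_eq_of_injective Polynomial.C_injective]
    exact lt_of_le_of_lt degree_C_le (natDegree_pos_iff_degree_pos.mp hg)
  have hmonic : p.Monic := by
    have : (g.map (algebraMap K K[X]) - Polynomial.C f).leadingCoeff =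
        Polynomial.C g.leadingCoeff := by
      rw [leadingCoeff_sub_of_degree_lt hdeglt, Polynomial.algebraMap_eq,
        leadingCoeff_map_of_injective Polynomial.C_injective]
    unfold Polynomial.Monic
    rw [hp, leadingCoeff_mul, leadingCoeff_C, this, ← Polynomial.C_mul,
      inv_mul_cancel₀ hlc, Polynomial.C_1]
  have hint : IsIntegral K[X] h := by
    refine ⟨p, hmonic, ?_⟩
    have : Polynomial.aeval h (g.map (algebraMap K K[X])) = Polynomial.aeval h g :=
      Polynomial.aeval_map_algebraMap _ _ _
    simp only [hp, eval₂_mul, eval₂_sub, eval₂_C, Polynomial.aeval_def] at *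
    rw [this, hfg, sub_self, mul_zero]
  obtain ⟨h₀, hh₀⟩ := IsIntegrallyClosed.isIntegral_iff.mp hint
  refine ⟨h₀, hh₀, ?_⟩
  apply IsFractionRing.injective K[X] (RatFunc K)
  rw [← hfg, ← hh₀, Polynomial.aeval_algebraMap_apply]
  congr 1
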